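/- Let G be a connected simple graph on N vertices with adjacency matrix A, let d = A𝟙 be the degree vector, Δ = max_i d_i the maximum degree, and set M = A − diag(d) + Δ·I. If M has exactly s distinct eigenvalues, then there exist s − 1 real matrices A^(1), …, A^(s−1), each in M(G), whose product equals (1/N)·𝟙𝟙ᵀ; that is, average consensus on G is linearly achievable in s − 1 steps using this matrix. -/

import Mathlib

open Matrix Polynomial

/-- A real `N × N` matrix complies with the graph `G` when its off-diagonal
entries vanish outside the edges of `G`. -/
def SimpleGraph.Complies {N : ℕ} (G : SimpleGraph (Fin N))
    (A : Matrix (Fin N) (Fin N) ℝ) : Prop :=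
  ∀ i j : Fin N, i ≠ j → ¬ G.Adj i j → A i j = 0

section helpers

variable {N : ℕ}

/-- If `v` is an eigenvector of `M` with eigenvalue `μ`, then applying any polynomial
in `M` to `v` scales by the polynomial evaluated at `μ`. -/
lemma aeval_mulVec_eq (M : Matrix (Fin N) (Fin N) ℝ) (v : Fin N → ℝ) (μ : ℝ)
    (h : M *ᵥ v = μ • v) (p : ℝ[X]) :
    (aeval M p) *ᵥ v = p.eval μ • v := by
  induction p using Polynomial.induction_on with
  | C a =>
      simp [aeval_C, Algebra.algebraMap_eq_smul_one, smul_mulVec, one_mulVec]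
  | add p q hp hq =>
      simp [map_add, add_mulVec, hp, hq, add_smul]
  | monomial n a ih =>
      have hx : (C a : ℝ[X]) * X ^ (n + 1) = (C a * X ^ n) * X := by ring
      rw [hx, _root_.map_mul, aeval_X, ← mulVec_mulVec, h, mulVec_smul, ih]
      rw [smul_smul]
      simp only [eval_mul, eval_pow, eval_C, eval_X, pow_succ]
      ring_nf

lemma aeval_commute (M : Matrix (Fin N) (Fin N) ℝ) (p : ℝ[X]) :
    M * aeval M p = aeval M p * M := by
  have : aeval M (X * p) = aeval M (p * X) := by rw [mul_comm]
  simpa [_root_.map_mul, aeval_X] using this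

lemma aeval_transpose (M : Matrix (Fin N) (Fin N) ℝ) (hM : Mᵀ = M) (p : ℝ[X]) :
    (aeval M p)ᵀ = aeval M p := by
  induction p using Polynomial.induction_on with
  | C a =>
      simp [aeval_C, Algebra.algebraMap_eq_smul_one, transpose_smul, transpose_one]
  | add p q hp hq => simp [map_add, transpose_add, hp, hq]
  | monomial n a ih =>
      have hx : (C a : ℝ[X]) * X ^ (n + 1) = (C a * X ^ n) * X := by ring
      rw [hx, _root_.map_mul, aeval_X, transpose_mul, hM, ih, aeval_commute]

/-- A polynomial vanishing at all eigenvalues of a hermitian matrix annihilates it. -/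
lemma aeval_eq_zero_of_eval_eigenvalues (M : Matrix (Fin N) (Fin N) ℝ)
    (hM : M.IsHermitian) (p : ℝ[X])
    (hp : ∀ i, p.eval (hM.eigenvalues i) = 0) : aeval M p = 0 := by
  have h0 : Matrix.toEuclideanLin (aeval M p) = 0 := by
    apply hM.eigenvectorBasis.toBasis.ext
    intro i
    have h1 : (aeval M p) *ᵥ ⇑(hM.eigenvectorBasis i) = 0 := by
      rw [aeval_mulVec_eq _ _ _ (hM.mulVec_eigenvectorBasis i) p, hp i, zero_smul]
    simp only [OrthonormalBasis.coe_toBasis, toEuclideanLin_apply, LinearMap.zero_apply]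
    rw [h1]
    simp
  exact Matrix.toEuclideanLin.map_eq_zero_iff.mp h0

end helpers

/-- For a connected graph `G` with adjacency matrix `A`, degree vector
`d = A𝟙` and maximum degree `Δ`, if the matrix `M = A - diag(d) + Δ·I` has
exactly `s` distinct eigenvalues, then average consensus on `G` is linearly
achievable in `s - 1` steps with compliant matrices. -/
theorem consensus_from_laplacian_shift {N : ℕ} (G : SimpleGraph (Fin N))
    [DecidableRel G.Adj] (hG : G.Connected)
    (d : Fin N → ℝ) (hd : d = (G.adjMatrix ℝ).mulVec (fun _ => 1))
    (Δ : ℝ) (hΔ : IsGreatest (Set.range d) Δ)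
    (M : Matrix (Fin N) (Fin N) ℝ)
    (hMdef : M = G.adjMatrix ℝ - Matrix.diagonal d + Δ • (1 : Matrix (Fin N) (Fin N) ℝ))
    (s : ℕ)
    (heig : {μ : ℝ | ∃ v : Fin N → ℝ, v ≠ 0 ∧ M.mulVec v = μ • v}.ncard = s) :
    ∃ A : Fin (s - 1) → Matrix (Fin N) (Fin N) ℝ,
      (∀ t : Fin (s - 1), G.Complies (A t)) ∧
      (List.ofFn A).reverse.prod = Matrix.of (fun _ _ => (N : ℝ)⁻¹) := by
  classical
  obtain ⟨i0⟩ := hG.nonempty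
  have hN : (0:ℝ) < N := by exact_mod_cast i0.pos
  -- basic facts about M
  have hMsymm : Mᵀ = M := by
    subst hMdef
    ext i j
    simp only [transpose_apply, Matrix.add_apply, Matrix.sub_apply,
      SimpleGraph.adjMatrix_apply, Matrix.diagonal_apply, Matrix.smul_apply,
      Matrix.one_apply, smul_eq_mul]
    by_cases h : i = j
    · subst h; rfl
    · simp [h, Ne.symm h, show G.Adj j i ↔ G.Adj i j from G.adj_comm j i]
  have hherm : M.IsHermitian := by
    show Mᴴ = M
    ext i j
    rw [conjTranspose_apply, star_trivial]
    exact congrFun (congrFun hMsymm i) j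
  -- degrees
  have hdeg : ∀ i, d i = (G.degree i : ℝ) := by
    intro i
    rw [hd, SimpleGraph.adjMatrix_mulVec_apply, Finset.sum_const, nsmul_eq_mul,
      mul_one, SimpleGraph.degree]
  -- M applied to 1
  have h1 : M *ᵥ (fun _ => (1:ℝ)) = Δ • (fun _ => (1:ℝ)) := by
    rw [hMdef, add_mulVec, sub_mulVec, smul_mulVec, one_mulVec, ← hd]
    funext i
    simp only [Pi.add_apply, Pi.sub_apply, Pi.smul_apply, mulVec_diagonal,
      smul_eq_mul, mul_one]
    ring
  have hone_ne : (fun _ => (1:ℝ)) ≠ (0 : Fin N → ℝ) := by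
    intro h
    have := congrFun h i0
    simp at this
  -- the eigenvalue set
  set S : Set ℝ := {μ : ℝ | ∃ v : Fin N → ℝ, v ≠ 0 ∧ M.mulVec v = μ • v} with hSdef
  have hΔS : Δ ∈ S := ⟨fun _ => 1, hone_ne, h1⟩
  have hSrange : S = Set.range hherm.eigenvalues := by
    apply Set.Subset.antisymm
    · rintro μ ⟨v, hv0, hv⟩
      -- q = ∏ i (X - C λᵢ) annihilates M
      set q : ℝ[X] := ∏ i : Fin N, (X - C (hherm.eigenvalues i)) with hq
      have hq0 : aeval M q = 0 := by
        apply aeval_eq_zero_of_eval_eigenvalues M hherm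
        intro i
        rw [hq, eval_prod]
        exact Finset.prod_eq_zero (Finset.mem_univ i) (by simp)
      have := aeval_mulVec_eq M v μ hv q
      rw [hq0] at this
      simp only [zero_mulVec] at this
      have hqμ : q.eval μ = 0 := by
        by_contra hne
        exact hv0 (by simpa [hne, smul_eq_zero] using this.symm)
      rw [hq, eval_prod] at hqμ
      obtain ⟨i, -, hi⟩ := Finset.prod_eq_zero_iff.mp hqμ
      simp only [eval_sub, eval_X, eval_C, sub_eq_zero] at hi
      exact ⟨i, hi.symm⟩
    · rintro μ ⟨i, rfl⟩
      exact ⟨_, (WithLp.ofLp_eq_zero 2).ne.2 <| hherm.eigenvectorBasis.orthonormal.ne_zero i,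
        hherm.mulVec_eigenvectorBasis i⟩
  have hSfin : S.Finite := hSrange ▸ Set.finite_range _
  set T : Finset ℝ := hSfin.toFinset with hT
  have hTcard : T.card = s := by
    rw [← heig, Set.ncard_eq_toFinset_card S hSfin]
  have hΔT : Δ ∈ T := hSfin.mem_toFinset.mpr hΔS
  set T' : Finset ℝ := T.erase Δ with hT'
  have hT'card : T'.card = s - 1 := by
    rw [hT', Finset.card_erase_of_mem hΔT, hTcard]
  -- enumerate the non-maximal eigenvalues
  set e : Fin (s - 1) ≃ T' := (Finset.equivFinOfCardEq hT'card).symm with he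
  set ν : Fin (s - 1) → ℝ := fun t => (e t : ℝ) with hν
  have hνmem : ∀ t, ν t ∈ T' := fun t => (e t).2
  have hνS : ∀ t, ν t ∈ S := fun t => hSfin.mem_toFinset.mp (Finset.mem_of_mem_erase (hνmem t))
  have hνne : ∀ t, Δ - ν t ≠ 0 := fun t =>
    sub_ne_zero.mpr (Ne.symm (Finset.ne_of_mem_erase (hνmem t)))
  -- the polynomial with the non-maximal eigenvalues as roots
  set P' : ℝ[X] := ∏ t : Fin (s - 1), (X - C (ν t)) with hP'
  set Q : Matrix (Fin N) (Fin N) ℝ := aeval M P' with hQ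
  -- full annihilating polynomial
  have hfull : aeval M ((X - C Δ) * P') = 0 := by
    have hsplit : (X - C Δ) * P' = ∏ μ ∈ T, (X - C μ) := by
      rw [hP', ← Finset.mul_prod_erase T _ hΔT, ← hT']
      congr 1
      rw [← Finset.prod_coe_sort T' (fun μ => (X - C μ : ℝ[X]))]
      exact Equiv.prod_comp e (fun x : T' => (X - C (x : ℝ) : ℝ[X]))
    rw [hsplit]
    apply aeval_eq_zero_of_eval_eigenvalues M hherm
    intro i
    have : hherm.eigenvalues i ∈ T := hSfin.mem_toFinset.mpr (hSrange ▸ ⟨i, rfl⟩)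
    rw [eval_prod]
    exact Finset.prod_eq_zero this (by simp)
  have hMΔ : aeval M (X - C Δ) = M - Δ • 1 := by
    simp [map_sub, aeval_X, aeval_C, Algebra.algebraMap_eq_smul_one]
  have hann : (M - Δ • 1) * Q = 0 := by
    rw [← hMΔ, hQ, ← _root_.map_mul, hfull]
  -- columns of Q lie in the kernel of the Laplacian, hence are constant
  have hlap : G.lapMatrix ℝ = Δ • 1 - M := by
    rw [hMdef, SimpleGraph.lapMatrix]
    have : G.degMatrix ℝ = Matrix.diagonal d := by
      rw [SimpleGraph.degMatrix,
        show (fun v => (G.degree v : ℝ)) = d from funext fun i => (hdeg i).symm]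
    rw [this]
    abel
  have hcol : ∀ j i i', Q i j = Q i' j := by
    intro j i i'
    set w : Fin N → ℝ := fun k => Q k j with hw
    have hw0 : (M - Δ • 1) *ᵥ w = 0 := by
      funext k
      have : ((M - Δ • 1) *ᵥ w) k = ((M - Δ • 1) * Q) k j := by
        simp [mulVec, dotProduct, mul_apply, hw]
      rw [this, hann]
      rfl
    have hlapw : Matrix.toLin' (G.lapMatrix ℝ) w = 0 := by
      rw [Matrix.toLin'_apply, hlap, sub_mulVec]
      rw [sub_mulVec] at hw0
      have := sub_eq_zero.mp hw0
      rw [sub_eq_zero]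
      exact this.symm
    exact (SimpleGraph.lapMatrix_mulVec_eq_zero_iff_forall_reachable G).mp
      hlapw i i' (hG.preconnected i i')
  -- Q is symmetric
  have hQsymm : ∀ i j, Q i j = Q j i := by
    intro i j
    have := aeval_transpose M hMsymm P'
    rw [← hQ] at this
    exact congrFun (congrFun this j) i
  -- hence Q is a constant matrix
  have hconst : ∀ i j, Q i j = Q i0 i0 := fun i j =>
    (hcol j i i0).trans ((hQsymm i0 j).trans (hcol i0 j i0))
  -- compute the constant
  have hQ1 : Q *ᵥ (fun _ => (1:ℝ)) = (∏ t, (Δ - ν t)) • (fun _ => (1:ℝ)) := by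
    rw [hQ, aeval_mulVec_eq M _ Δ h1 P']
    congr 1
    rw [hP', eval_prod]
    simp
  have hsum : (N : ℝ) * Q i0 i0 = ∏ t, (Δ - ν t) := by
    have := congrFun hQ1 i0
    simp only [mulVec, dotProduct, mul_one, Pi.smul_apply, smul_eq_mul] at this
    rw [← this]
    rw [Finset.sum_congr rfl (fun j _ => hconst i0 j)]
    rw [Finset.sum_const, nsmul_eq_mul]
    simp
  have hcne : (∏ t, (Δ - ν t)) ≠ 0 := Finset.prod_ne_zero_iff.mpr (fun t _ => hνne t)
  have hQval : ∀ i j, Q i j = (∏ t, (Δ - ν t)) / N := by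
    intro i j
    rw [hconst i j, eq_div_iff (ne_of_gt hN), mul_comm, hsum]
  -- the consensus matrices
  refine ⟨fun t => (Δ - ν t)⁻¹ • (M - ν t • 1), ?_, ?_⟩
  · intro t i j hij hadj
    have hM0 : M i j = 0 := by
      rw [hMdef]
      simp [Matrix.add_apply, Matrix.sub_apply, Matrix.diagonal_apply, Matrix.one_apply,
        hij, hadj]
    simp [Matrix.smul_apply, Matrix.sub_apply, Matrix.one_apply, hij, hM0]
  · -- identify the product with a polynomial in M
    set g : Fin (s - 1) → ℝ[X] := fun t => C ((Δ - ν t)⁻¹) * (X - C (ν t)) with hg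
    have hAg : ∀ t, (Δ - ν t)⁻¹ • (M - ν t • 1) = aeval M (g t) := by
      intro t
      rw [hg]
      simp only [_root_.map_mul, map_sub, aeval_X, aeval_C,
        Algebra.algebraMap_eq_smul_one]
      try rw [smul_mul_assoc, one_mul]
    have hprod : (List.ofFn fun t => (Δ - ν t)⁻¹ • (M - ν t • 1)).reverse.prod
        = aeval M ((List.ofFn g).reverse.prod) := by
      rw [funext hAg]
      rw [show (List.ofFn fun t => aeval M (g t)) = (List.ofFn g).map (aeval M) by
        rw [List.map_ofFn]; rfl]
      rw [← List.map_reverse, ← map_list_prod (aeval M : ℝ[X] →ₐ[ℝ] _)]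
      try rfl
    rw [hprod]
    have : (List.ofFn g).reverse.prod = C (∏ t, (Δ - ν t)⁻¹) * P' := by
      rw [List.prod_reverse, List.prod_ofFn, hP', map_prod, ← Finset.prod_mul_distrib]
      try rfl
    rw [this, _root_.map_mul, aeval_C, Algebra.algebraMap_eq_smul_one, ← hQ,
      smul_mul_assoc, one_mul]
    ext i j
    simp only [Matrix.smul_apply, smul_eq_mul, Matrix.of_apply]
    rw [hQval i j]
    rw [show (∏ t, (Δ - ν t)⁻¹) = (∏ t, (Δ - ν t))⁻¹ by
      rw [← Finset.prod_inv_distrib]]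
    field_simp
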